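/- arXiv:2202.00129 — 2 statements merged into one kernel-verified Lean document; each statement's English description precedes it below -/
import Mathlib

section
/- For every convex function f : ℝ → ℝ on (0,∞) with f(1) = 0, every fixed c ≥ 0, and all 0 ≤ q ≤ q' ≤ 1, the f-inverse is monotone in its first argument: D_f^{-1}(q | c) ≤ D_f^{-1}(q' | c). -/
open Set Filter MeasureTheory ProbabilityTheory ENNReal NNReal
open scoped Classical

/-- Limit (limsup) of the slope `f x / x` at infinity, as an extended real number;
used for the contribution of the singular part in the `f`-divergence. -/
noncomputable def derivAtTop (f : ℝ → ℝ) : EReal :=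
  Filter.limsup (fun x => ((f x / x : ℝ) : EReal)) Filter.atTop

/-- The `f`-divergence between two measures. -/
noncomputable def fDiv {Ω : Type*} [MeasurableSpace Ω] (f : ℝ → ℝ) (μ ν : Measure Ω) : EReal :=
  if Integrable (fun x => f ((μ.rnDeriv ν x).toReal)) ν then
    ((∫ x, f ((μ.rnDeriv ν x).toReal) ∂ν : ℝ) : EReal)
      + derivAtTop f * ((μ.singularPart ν Set.univ : ℝ≥0∞) : EReal)
  else ⊤

/-- The Bernoulli measure on `Bool` with mean `p`. -/
noncomputable def bern (p : ℝ) : Measure Bool :=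
  ENNReal.ofReal p • Measure.dirac true + ENNReal.ofReal (1 - p) • Measure.dirac false

/-- The Bernoulli `f`-divergence `D_{f,B}(p‖q)`: the `f`-divergence of the
corresponding Bernoulli probability measures. -/
noncomputable def bernFDiv (f : ℝ → ℝ) (p q : ℝ) : EReal := fDiv f (bern p) (bern q)

/-- The `f`-inverse `D_f⁻¹(q | c) := sup { p ∈ [0,1] : D_{f,B}(p‖q) ≤ c }`. -/
noncomputable def fInv (f : ℝ → ℝ) (q : ℝ) (c : EReal) : ℝ :=
  sSup {p : ℝ | p ∈ Set.Icc (0:ℝ) 1 ∧ bernFDiv f p q ≤ c}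


instance smulDiracFin (c : ℝ) (b : Bool) : IsFiniteMeasure (ENNReal.ofReal c • Measure.dirac b) := by
  constructor
  rw [Measure.smul_apply, smul_eq_mul]
  exact ENNReal.mul_lt_top ofReal_lt_top (by simp)

instance (p : ℝ) : IsFiniteMeasure (bern p) := by
  rw [bern]; infer_instance

lemma integral_bern (p : ℝ) (hp0 : 0 ≤ p) (hp1 : p ≤ 1) (h : Bool → ℝ) :
    ∫ x, h x ∂(bern p) = p * h true + (1-p) * h false := by
  rw [bern, integral_add_measure Integrable.of_finite Integrable.of_finite,
    integral_smul_measure, integral_smul_measure, integral_dirac, integral_dirac]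
  simp [ENNReal.toReal_ofReal hp0, ENNReal.toReal_ofReal (by linarith : (0:ℝ) ≤ 1 - p),
    smul_eq_mul]

lemma lintegral_bern (p : ℝ) (g : Bool → ℝ≥0∞) :
    ∫⁻ x, g x ∂(bern p) = ENNReal.ofReal p * g true + ENNReal.ofReal (1-p) * g false := by
  rw [bern, lintegral_add_measure, lintegral_smul_measure, lintegral_smul_measure,
    lintegral_dirac, lintegral_dirac]
  simp only [smul_eq_mul]

lemma bern_eq_withDensity (p q : ℝ) (hq0 : 0 < q) (hq1 : q < 1) :
    bern p = (bern q).withDensity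
      (fun x => if x then ENNReal.ofReal (p/q) else ENNReal.ofReal ((1-p)/(1-q))) := by
  ext s hs
  rw [withDensity_apply _ hs, ← lintegral_indicator hs, lintegral_bern]
  rw [bern]
  simp only [Measure.coe_add, Pi.add_apply, Measure.smul_apply, smul_eq_mul,
    Measure.dirac_apply]
  by_cases ht : true ∈ s <;> by_cases hf : false ∈ s <;>
    simp only [Set.indicator_of_mem, Set.indicator_of_notMem, ht, hf, if_true, if_false,
      Pi.one_apply, mul_one, mul_zero, zero_add, add_zero,
      ← ENNReal.ofReal_mul hq0.le, ← ENNReal.ofReal_mul (by linarith : (0:ℝ) ≤ 1 - q),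
      mul_div_cancel₀ _ hq0.ne', mul_div_cancel₀ _ (by linarith : 1 - q ≠ 0),
      Bool.false_eq_true, not_false_iff]

lemma bernFDiv_eq (f : ℝ → ℝ) (p q : ℝ) (hp0 : 0 ≤ p) (hp1 : p ≤ 1) (hq0 : 0 < q) (hq1 : q < 1) :
    bernFDiv f p q = ((q * f (p/q) + (1-q) * f ((1-p)/(1-q)) : ℝ) : EReal) := by
  set g : Bool → ℝ≥0∞ := fun x => if x then ENNReal.ofReal (p/q) else ENNReal.ofReal ((1-p)/(1-q))
    with hg
  have hd : bern p = 0 + (bern q).withDensity g := by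
    rw [zero_add]; exact bern_eq_withDensity p q hq0 hq1
  have hgm : Measurable g := measurable_of_countable g
  have hr : g =ᵐ[bern q] (bern p).rnDeriv (bern q) :=
    Measure.eq_rnDeriv hgm Measure.MutuallySingular.zero_left hd
  have hsing : (bern p).singularPart (bern q) = 0 :=
    (Measure.eq_singularPart hgm Measure.MutuallySingular.zero_left hd).symm
  have hcong : (fun x => f (((bern p).rnDeriv (bern q) x).toReal))
      =ᵐ[bern q] (fun x => f ((g x).toReal)) := hr.mono fun x hx => by simp only [← hx]
  have hint : ∫ x, f (((bern p).rnDeriv (bern q) x).toReal) ∂(bern q)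
      = q * f (p/q) + (1-q) * f ((1-p)/(1-q)) := by
    rw [integral_congr_ae hcong, integral_bern q hq0.le hq1.le]
    rw [hg]
    simp only [if_true, Bool.false_eq_true, if_false,
      ENNReal.toReal_ofReal (div_nonneg hp0 hq0.le),
      ENNReal.toReal_ofReal (div_nonneg (by linarith : (0:ℝ) ≤ 1 - p) (by linarith : (0:ℝ) ≤ 1 - q))]
  rw [bernFDiv, fDiv, if_pos Integrable.of_finite, hint, hsing]
  simp

lemma fDiv_self {Ω : Type*} [MeasurableSpace Ω] (f : ℝ → ℝ) (hf1 : f 1 = 0)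
    (μ : Measure Ω) [IsFiniteMeasure μ] : fDiv f μ μ = 0 := by
  have hr : μ.rnDeriv μ =ᵐ[μ] fun _ => 1 := Measure.rnDeriv_self μ
  have hcong : (fun x => f ((μ.rnDeriv μ x).toReal)) =ᵐ[μ] (fun _ => (0:ℝ)) :=
    hr.mono fun x hx => by simp [hx, hf1]
  have hint : Integrable (fun x => f ((μ.rnDeriv μ x).toReal)) μ :=
    (integrable_congr hcong).2 (integrable_const 0)
  rw [fDiv, if_pos hint, integral_congr_ae hcong]
  simp [Measure.singularPart_self]

lemma bernFDiv_self (f : ℝ → ℝ) (hf1 : f 1 = 0) (t : ℝ) : bernFDiv f t t = 0 :=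
  fDiv_self f hf1 (bern t)

lemma bern_zero : bern 0 = Measure.dirac false := by
  rw [bern]; simp

lemma bernFDiv_zero_right (f : ℝ → ℝ) (p : ℝ) (hp0 : 0 ≤ p) (hp1 : p ≤ 1) :
    bernFDiv f p 0 = ((f (1-p) : ℝ) : EReal)
      + derivAtTop f * ((ENNReal.ofReal p : ℝ≥0∞) : EReal) := by
  have hd : bern p = (ENNReal.ofReal p • Measure.dirac true)
      + (bern 0).withDensity (fun _ => ENNReal.ofReal (1-p)) := by
    rw [bern_zero, withDensity_const, bern]
  have hms : (ENNReal.ofReal p • Measure.dirac true) ⟂ₘ bern 0 := by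
    refine ⟨{false}, trivial, ?_, ?_⟩
    · simp [Measure.smul_apply]
    · rw [bern_zero]; simp
  have hgm : Measurable (fun _ : Bool => ENNReal.ofReal (1-p)) := measurable_const
  have hr : (fun _ : Bool => ENNReal.ofReal (1-p)) =ᵐ[bern 0] (bern p).rnDeriv (bern 0) :=
    Measure.eq_rnDeriv hgm hms hd
  have hsing : (bern p).singularPart (bern 0) = ENNReal.ofReal p • Measure.dirac true :=
    (Measure.eq_singularPart hgm hms hd).symm
  have hcong : (fun x => f (((bern p).rnDeriv (bern 0) x).toReal))
      =ᵐ[bern 0] (fun _ => f (1-p)) := hr.mono fun x hx => by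
        simp only [← hx, ENNReal.toReal_ofReal (by linarith : (0:ℝ) ≤ 1 - p)]
  rw [bernFDiv, fDiv, if_pos Integrable.of_finite, integral_congr_ae hcong, hsing]
  rw [bern_zero]
  simp [Measure.smul_apply, Measure.real, Measure.dirac_apply_of_mem (show false ∈ ({false, true} : Set Bool) by simp)]

lemma slope_le_derivAtTop (f : ℝ → ℝ) (hf : ConvexOn ℝ (Set.Ioi (0:ℝ)) f) (hf1 : f 1 = 0)
    (x : ℝ) (hx : 1 < x) : ((f x / (x-1) : ℝ) : EReal) ≤ derivAtTop f := by
  set s := f x / (x-1) with hs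
  have hx1 : (0:ℝ) < x - 1 := by linarith
  have hfx : f x = s * (x-1) := by rw [hs]; field_simp
  have hlow : ∀ t : ℝ, x < t → s - s/t ≤ f t / t := by
    intro t ht
    have ht0 : (0:ℝ) < t := by linarith
    have hslope := hf.slope_mono_adjacent (x := 1) (y := x) (z := t)
      (by simp) (by simp [ht0]) hx ht
    rw [hf1, sub_zero] at hslope
    -- hslope : f x / (x - 1) ≤ (f t - f x) / (t - x)
    have h2 : f x + s * (t - x) ≤ f t := by
      have htx : (0:ℝ) < t - x := by linarith
      rw [div_le_div_iff₀ hx1 htx] at hslope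
      nlinarith [hslope]
    have heq : (f x + s * (t-x)) / t = s - s/t := by rw [hfx]; field_simp; ring
    have h3 : (f x + s * (t-x)) / t ≤ f t / t := by gcongr
    linarith [heq ▸ h3]
  have htend : Tendsto (fun t : ℝ => ((s - s/t : ℝ) : EReal)) atTop (nhds ((s:ℝ) : EReal)) := by
    have h1 : Tendsto (fun t : ℝ => s - s/t) atTop (nhds s) := by
      have := (tendsto_const_nhds (x := s) (f := atTop (α := ℝ))).sub
        ((tendsto_const_nhds (x := s)).div_atTop tendsto_id)
      simpa using this
    exact (continuous_coe_real_ereal.tendsto s).comp h1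
  have hliminf : ((s:ℝ) : EReal) ≤ Filter.liminf (fun t => ((f t / t : ℝ) : EReal)) atTop := by
    rw [← htend.liminf_eq]
    apply Filter.liminf_le_liminf
    · filter_upwards [Filter.eventually_gt_atTop x] with t ht
      exact EReal.coe_le_coe_iff.2 (hlow t ht)
    · isBoundedDefault
    · isBoundedDefault
  exact hliminf.trans (Filter.liminf_le_limsup)

lemma derivAtTop_ne_bot (f : ℝ → ℝ) (hf : ConvexOn ℝ (Set.Ioi (0:ℝ)) f) (hf1 : f 1 = 0) :
    derivAtTop f ≠ ⊥ := by
  intro h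
  have := slope_le_derivAtTop f hf hf1 2 (by norm_num)
  rw [h, le_bot_iff] at this
  exact EReal.coe_ne_bot _ this

lemma f_le_of_derivAtTop (f : ℝ → ℝ) (hf : ConvexOn ℝ (Set.Ioi (0:ℝ)) f) (hf1 : f 1 = 0)
    {r : ℝ} (hr : derivAtTop f = (r : EReal)) {y : ℝ} (hy : 1 < y) : f y ≤ r * (y - 1) := by
  have h := slope_le_derivAtTop f hf hf1 y hy
  rw [hr] at h
  have h2 : f y / (y - 1) ≤ r := EReal.coe_le_coe_iff.1 h
  have hy1 : (0:ℝ) < y - 1 := by linarith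
  calc f y = (f y / (y-1)) * (y-1) := by field_simp
    _ ≤ r * (y-1) := mul_le_mul_of_nonneg_right h2 hy1.le


set_option maxHeartbeats 1000000 in
/-- **Monotonicity of the `f`-inverse in its first argument.**
For every convex `f` on `(0, ∞)` with `f 1 = 0`, every `c ≥ 0` and all `0 ≤ q ≤ q' ≤ 1`,
`D_f⁻¹(q | c) ≤ D_f⁻¹(q' | c)`. -/
theorem fInv_mono_in_q (f : ℝ → ℝ) (hf : ConvexOn ℝ (Set.Ioi (0:ℝ)) f) (hf1 : f 1 = 0)
    (c : ℝ) (hc : 0 ≤ c) (q q' : ℝ) (hq0 : 0 ≤ q) (hqq' : q ≤ q') (hq'1 : q' ≤ 1) :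
    fInv f q ((c : ℝ) : EReal) ≤ fInv f q' ((c : ℝ) : EReal) := by
  rcases hqq'.eq_or_lt with rfl | hlt
  · exact le_refl _
  have hq'0 : 0 < q' := hq0.trans_lt hlt
  have hbdd' : BddAbove {p : ℝ | p ∈ Set.Icc (0:ℝ) 1 ∧ bernFDiv f p q' ≤ ((c:ℝ):EReal)} :=
    ⟨1, fun p hp => hp.1.2⟩
  have hcge : (0:EReal) ≤ ((c:ℝ):EReal) := by exact_mod_cast hc
  have hq'mem : q' ∈ {p : ℝ | p ∈ Set.Icc (0:ℝ) 1 ∧ bernFDiv f p q' ≤ ((c:ℝ):EReal)} :=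
    ⟨⟨hq'0.le, hq'1⟩, by rw [bernFDiv_self f hf1]; exact hcge⟩
  rw [fInv, fInv]
  apply Real.sSup_le _ (hq'0.le.trans (le_csSup hbdd' hq'mem))
  rintro p ⟨⟨hp0, hp1⟩, hpd⟩
  by_cases hpq' : p ≤ q'
  · exact hpq'.trans (le_csSup hbdd' hq'mem)
  push_neg at hpq'
  have hq'lt1 : q' < 1 := hpq'.trans_le hp1
  have hppos : 0 < p := hq'0.trans hpq'
  have h1q : (0:ℝ) < 1 - q := by linarith
  have h1q' : (0:ℝ) < 1 - q' := by linarith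
  set lam := (1 - q')/(1 - q) with hlam
  have hlam0 : 0 < lam := div_pos h1q' h1q
  have hlam1 : lam < 1 := (div_lt_one h1q).2 (by linarith)
  set p' := lam * p + (1 - lam) with hp'def
  have h1q'eq : 1 - q' = lam * (1 - q) := by rw [hlam]; field_simp
  have hq'eq : q' = lam * q + (1 - lam) := by linear_combination -h1q'eq
  have h1p' : 1 - p' = lam * (1 - p) := by rw [hp'def]; ring
  have hp'0 : 0 ≤ p' := by nlinarith [mul_nonneg hlam0.le hp0]
  have hp'1 : p' ≤ 1 := by nlinarith [mul_le_mul_of_nonneg_left hp1 hlam0.le]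
  have hpp' : p ≤ p' := by
    nlinarith [mul_nonneg (by linarith : (0:ℝ) ≤ 1 - lam) (by linarith : (0:ℝ) ≤ 1 - p)]
  have hratio : (1 - p')/(1 - q') = (1 - p)/(1 - q) := by
    rw [h1p', h1q'eq, mul_div_mul_left _ _ hlam0.ne']
  have hkey : bernFDiv f p' q' ≤ ((c:ℝ):EReal) := by
    rw [bernFDiv_eq f p' q' hp'0 hp'1 hq'0 hq'lt1, hratio]
    rcases hq0.eq_or_lt with hq0' | hqpos
    · -- q = 0
      subst hq0'
      rw [bernFDiv_zero_right f p hp0 hp1] at hpd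
      have hbot := derivAtTop_ne_bot f hf hf1
      have hq'eq0 : q' = 1 - lam := by rw [hq'eq]; ring
      by_cases htop : derivAtTop f = ⊤
      · exfalso
        rw [htop, EReal.coe_ennreal_ofReal, max_eq_left hp0,
          EReal.top_mul_of_pos (by exact_mod_cast hppos : (0:EReal) < ((p:ℝ):EReal)),
          EReal.coe_add_top] at hpd
        exact (EReal.coe_lt_top c).not_ge hpd
      · obtain ⟨r, hr⟩ : ∃ r : ℝ, ((r:ℝ):EReal) = derivAtTop f :=
          EReal.canLift.prf (derivAtTop f) ⟨htop, hbot⟩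
        rw [← hr, EReal.coe_ennreal_ofReal, max_eq_left hp0, ← EReal.coe_mul,
          ← EReal.coe_add] at hpd
        have hD : f (1-p) + r * p ≤ c := EReal.coe_le_coe_iff.1 hpd
        apply EReal.coe_le_coe_iff.2
        have hpq0 : p' - q' = lam * p := by rw [hp'def, hq'eq0]; ring
        have hy : 1 < p'/q' := by
          rw [one_lt_div hq'0]
          nlinarith [mul_pos hlam0 hppos]
        have hfy : f (p'/q') ≤ r * (p'/q' - 1) := f_le_of_derivAtTop f hf hf1 hr.symm hy
        have h2 : q' * f (p'/q') ≤ q' * (r * (p'/q' - 1)) :=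
          mul_le_mul_of_nonneg_left hfy hq'0.le
        have h3 : q' * (r * (p'/q' - 1)) = r * (lam * p) := by
          rw [← hpq0]; field_simp
        have h4 : q' * f (p'/q') ≤ r * (lam * p) := h2.trans_eq h3
        have h5 : lam * (f (1-p) + r*p) ≤ lam * c := mul_le_mul_of_nonneg_left hD hlam0.le
        have e3 : lam * c ≤ c := by
          nlinarith [mul_nonneg (by linarith : (0:ℝ) ≤ 1 - lam) hc]
        have hlameq : (1:ℝ) - q' = lam := by rw [hq'eq0]; ring
        rw [show (1:ℝ) - 0 = 1 by norm_num, div_one, hlameq]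
        linarith [h4, h5, e3]
    · -- q > 0
      rw [bernFDiv_eq f p q hp0 hp1 hqpos (hlt.trans hq'lt1)] at hpd
      have hD : q * f (p/q) + (1-q) * f ((1-p)/(1-q)) ≤ c := EReal.coe_le_coe_iff.1 hpd
      apply EReal.coe_le_coe_iff.2
      have hpers : f (p'/q') ≤ lam*q/q' * f (p/q) := by
        have ha : 0 ≤ lam*q/q' := by positivity
        have hb : 0 ≤ (1-lam)/q' := div_nonneg (by linarith) hq'0.le
        have hab : lam*q/q' + (1-lam)/q' = 1 := by
          rw [← add_div, div_eq_one_iff_eq hq'0.ne']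
          linarith [hq'eq]
        have h := hf.2 (Set.mem_Ioi.2 (div_pos hppos hqpos)) (Set.mem_Ioi.2 one_pos) ha hb hab
        rw [hf1] at h
        simp only [smul_eq_mul, mul_one, mul_zero, add_zero] at h
        have harg : lam*q/q' * (p/q) + (1-lam)/q' = p'/q' := by
          rw [hp'def]
          field_simp
        rwa [harg] at h
      have h2 : q' * f (p'/q') ≤ q' * (lam*q/q' * f (p/q)) :=
        mul_le_mul_of_nonneg_left hpers hq'0.le
      have h3 : q' * (lam*q/q' * f (p/q)) = lam * q * f (p/q) := by
        field_simp
      have h4 : q' * f (p'/q') ≤ lam * q * f (p/q) := h2.trans_eq h3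
      have e : (1-q') * f ((1-p)/(1-q)) = lam * (1-q) * f ((1-p)/(1-q)) := by
        rw [h1q'eq]
      have h5 : lam * (q * f (p/q) + (1-q) * f ((1-p)/(1-q))) ≤ lam * c :=
        mul_le_mul_of_nonneg_left hD hlam0.le
      have e3 : lam * c ≤ c := by
        nlinarith [mul_nonneg (by linarith : (0:ℝ) ≤ 1 - lam) hc]
      linarith [h4, e, h5, e3]
  exact hpp'.trans (le_csSup hbdd' ⟨⟨hp'0, hp'1⟩, hkey⟩)
end

section
/- In the finite-horizon POMDP setting, fix t ∈ {0,…,T−1}, an open-loop action prefix a_{0:t−1}, and a state-independent probability measure q on O. Define R̃_{t→T} as the reward-to-go in which the observation o_t is drawn from q (independently of s_t) while all subsequent observations o_k for k > t are drawn from σ_k(s_k). Then sup over measurable policies π_t^t, …, π_t^{T−1} of R̃_{t→T} equals R^{⊥⋆}_{t→T}; in particular this supremum does not depend on q. -/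
open Set Filter MeasureTheory ProbabilityTheory ENNReal NNReal
open scoped Classical

/-- The distribution `p_t(·|a_{0:t−1})` of the state at time `t` obtained by propagating the
initial distribution `p0` through the transition kernels using the open-loop action
prefix `a_{0:t−1}`. -/
noncomputable def stateDist {S A : Type*} [MeasurableSpace S] [MeasurableSpace A]
    (p0 : Measure S) (P : ℕ → Kernel (S × A) S) :
    (t : ℕ) → (Fin t → A) → Measure S
  | 0, _ => p0
  | (t+1), a =>
      (stateDist p0 P t (fun i => a i.castSucc)).bind (fun s => P (t+1) (s, a (Fin.last t)))

/-- Expected reward-to-go of a history-dependent policy `π`, starting from state `s` at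
(absolute) time `k`, with `n` steps remaining and with `hist : Fin m → O` the observations
collected so far (since the starting time of the policy).  At each step an observation `o`
is drawn from the sensor `σ k`, the action `π m (hist.snoc o)` is applied (a measurable
function of all observations received so far), the reward `r k` is collected, and the state
evolves through the transition kernel `P (k+1)`. -/
noncomputable def valAux {S O A : Type*}
    [MeasurableSpace S] [MeasurableSpace O] [MeasurableSpace A]
    (P : ℕ → Kernel (S × A) S) (σ : ℕ → Kernel S O) (r : ℕ → S → A → ℝ)
    (π : (k : ℕ) → (Fin (k + 1) → O) → A) :
    (n : ℕ) → (k : ℕ) → (m : ℕ) → (Fin m → O) → S → ℝ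
  | 0, _, _, _, _ => 0
  | (n+1), k, m, hist, s =>
      ∫ o, (r k s (π m (Fin.snoc hist o)) +
          ∫ s', valAux P σ r π n (k+1) (m+1) (Fin.snoc hist o) s'
            ∂(P (k+1) (s, π m (Fin.snoc hist o)))) ∂(σ k s)

/-- The reward-to-go `R_{t→T}`: the total expected reward over times `t, …, T−1` when the
state at time `t` is distributed according to `p_t(·|a_{0:t−1})` (obtained from the open-loop
prefix `a_{0:t−1}`) and the policies `π_t^t, …, π_t^{T−1}` (encoded as `π k` acting on the
observations `o_{t:t+k}`) are applied from time `t` onwards. -/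
noncomputable def rewardToGo {S O A : Type*}
    [MeasurableSpace S] [MeasurableSpace O] [MeasurableSpace A]
    (p0 : Measure S) (P : ℕ → Kernel (S × A) S) (σ : ℕ → Kernel S O) (r : ℕ → S → A → ℝ)
    (T t : ℕ) (a : Fin t → A) (π : (k : ℕ) → (Fin (k + 1) → O) → A) : ℝ :=
  ∫ s, valAux P σ r π (T - t) t 0 Fin.elim0 s ∂(stateDist p0 P t a)

/-- The modified reward-to-go `R̃_{t→T}` in which the first observation `o_t` is drawn from a
state-independent probability measure `q` on `O` (all subsequent observations `o_k`, `k > t`,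
are drawn from the sensors `σ k`). -/
noncomputable def rewardToGoTilde {S O A : Type*}
    [MeasurableSpace S] [MeasurableSpace O] [MeasurableSpace A]
    (p0 : Measure S) (P : ℕ → Kernel (S × A) S) (σ : ℕ → Kernel S O) (r : ℕ → S → A → ℝ)
    (q : Measure O) (T t : ℕ) (a : Fin t → A)
    (π : (k : ℕ) → (Fin (k + 1) → O) → A) : ℝ :=
  ∫ s, (∫ o, (r t s (π 0 (fun _ => o)) +
      ∫ s', valAux P σ r π (T - t - 1) (t+1) 1 (fun _ => o) s'
        ∂(P (t+1) (s, π 0 (fun _ => o)))) ∂q) ∂(stateDist p0 P t a)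
set_option linter.unusedSectionVars false
section Aux
variable {S O A : Type*} [MeasurableSpace S] [MeasurableSpace O] [MeasurableSpace A]

lemma measurable_snocFun {m : ℕ} :
    Measurable (fun p : (Fin m → O) × O => (Fin.snoc p.1 p.2 : Fin (m + 1) → O)) := by
  apply measurable_pi_lambda
  intro i
  refine Fin.lastCases ?_ ?_ i
  · simpa only [Fin.snoc_last] using (measurable_snd : Measurable fun p : (Fin m → O) × O => p.2)
  · intro j
    simpa only [Fin.snoc_castSucc] using (show Measurable fun p : (Fin m → O) × O => p.1 j from
      (measurable_pi_apply j).comp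
      (measurable_fst : Measurable fun p : (Fin m → O) × O => p.1))

lemma measurable_consFun (o : O) {m : ℕ} :
    Measurable (fun h : Fin m → O => (Fin.cons o h : Fin (m + 1) → O)) := by
  apply measurable_pi_lambda
  intro i
  refine Fin.cases ?_ ?_ i
  · simpa only [Fin.cons_zero] using (measurable_const : Measurable fun _ : Fin m → O => o)
  · intro j
    simpa only [Fin.cons_succ] using measurable_pi_apply j

lemma constFun_eq_cons (o : O) : (fun _ : Fin 1 => o) = Fin.cons o Fin.elim0 := by
  funext i
  have : i = 0 := Subsingleton.elim i 0
  rw [this, Fin.cons_zero]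

end Aux
section Aux2
variable {S O A : Type*} [MeasurableSpace S] [MeasurableSpace O] [MeasurableSpace A]

lemma stronglyMeasurable_valAux
    (P : ℕ → Kernel (S × A) S) [∀ k, IsMarkovKernel (P k)]
    (σ : ℕ → Kernel S O) [∀ k, IsMarkovKernel (σ k)]
    (r : ℕ → S → A → ℝ) (hr : ∀ k, Measurable (Function.uncurry (r k)))
    (π : (k : ℕ) → (Fin (k + 1) → O) → A) (hπ : ∀ k, Measurable (π k)) :
    ∀ (n k m : ℕ), StronglyMeasurable
      (fun p : (Fin m → O) × S => valAux P σ r π n k m p.1 p.2) := by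
  intro n
  induction n with
  | zero => intro k m; simp only [valAux]; exact stronglyMeasurable_const
  | succ n ih =>
    intro k m
    have hsnoc : Measurable (fun x : ((Fin m → O) × S) × O =>
        (Fin.snoc x.1.1 x.2 : Fin (m + 1) → O)) :=
      measurable_snocFun.comp (measurable_fst.fst.prodMk measurable_snd)
    have hact : Measurable (fun x : ((Fin m → O) × S) × O => π m (Fin.snoc x.1.1 x.2)) :=
      (hπ m).comp hsnoc
    have hrew : StronglyMeasurable (fun x : ((Fin m → O) × S) × O =>
        r k x.1.2 (π m (Fin.snoc x.1.1 x.2))) :=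
      ((hr k).comp (measurable_fst.snd.prodMk hact)).stronglyMeasurable
    have hmap : Measurable (fun x : ((Fin m → O) × S) × O =>
        (x.1.2, π m (Fin.snoc x.1.1 x.2))) := measurable_fst.snd.prodMk hact
    have hf : StronglyMeasurable (fun y : (((Fin m → O) × S) × O) × S =>
        valAux P σ r π n (k + 1) (m + 1) (Fin.snoc y.1.1.1 y.1.2) y.2) :=
      (ih (k + 1) (m + 1)).comp_measurable
        ((hsnoc.comp measurable_fst).prodMk measurable_snd)
    have hinner : StronglyMeasurable (fun x : ((Fin m → O) × S) × O =>
        ∫ s', valAux P σ r π n (k + 1) (m + 1) (Fin.snoc x.1.1 x.2) s'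
          ∂((P (k + 1)).comap _ hmap x)) :=
      hf.integral_kernel_prod_right'
    simp only [Kernel.comap_apply] at hinner
    have houter : StronglyMeasurable (fun p : (Fin m → O) × S =>
        ∫ o, (r k p.2 (π m (Fin.snoc p.1 o)) +
          ∫ s', valAux P σ r π n (k + 1) (m + 1) (Fin.snoc p.1 o) s'
            ∂(P (k + 1) (p.2, π m (Fin.snoc p.1 o))))
          ∂((σ k).comap (Prod.snd : (Fin m → O) × S → S) measurable_snd p)) :=
      (hrew.add hinner).integral_kernel_prod_right'
    simp only [Kernel.comap_apply] at houter
    simpa only [valAux] using houter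

lemma valAux_nonneg
    (P : ℕ → Kernel (S × A) S) (σ : ℕ → Kernel S O)
    (r : ℕ → S → A → ℝ) (hr01 : ∀ k s a', r k s a' ∈ Set.Icc (0:ℝ) 1)
    (π : (k : ℕ) → (Fin (k + 1) → O) → A) :
    ∀ (n k m : ℕ) (hist : Fin m → O) (s : S), 0 ≤ valAux P σ r π n k m hist s := by
  intro n
  induction n with
  | zero => intro k m hist s; simp [valAux]
  | succ n ih =>
    intro k m hist s
    simp only [valAux]
    refine integral_nonneg fun o => add_nonneg (hr01 k s _).1 (integral_nonneg fun s' => ih _ _ _ _)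

lemma abs_valAux_le
    (P : ℕ → Kernel (S × A) S) [∀ k, IsMarkovKernel (P k)]
    (σ : ℕ → Kernel S O) [∀ k, IsMarkovKernel (σ k)]
    (r : ℕ → S → A → ℝ) (hr01 : ∀ k s a', r k s a' ∈ Set.Icc (0:ℝ) 1)
    (π : (k : ℕ) → (Fin (k + 1) → O) → A) :
    ∀ (n k m : ℕ) (hist : Fin m → O) (s : S), |valAux P σ r π n k m hist s| ≤ n := by
  intro n
  induction n with
  | zero => intro k m hist s; simp [valAux]
  | succ n ih =>
    intro k m hist s
    simp only [valAux]
    have h : ∀ o : O, ‖r k s (π m (Fin.snoc hist o)) +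
        ∫ s', valAux P σ r π n (k + 1) (m + 1) (Fin.snoc hist o) s'
          ∂(P (k + 1) (s, π m (Fin.snoc hist o)))‖ ≤ 1 + n := by
      intro o
      have h1 : |r k s (π m (Fin.snoc hist o))| ≤ 1 := by
        rcases hr01 k s (π m (Fin.snoc hist o)) with ⟨h0, h1⟩
        rw [abs_le]; constructor <;> linarith
      have h2 : ‖∫ s', valAux P σ r π n (k + 1) (m + 1) (Fin.snoc hist o) s'
          ∂(P (k + 1) (s, π m (Fin.snoc hist o)))‖ ≤ (n : ℝ) := by
        have := norm_integral_le_of_norm_le_const (μ := P (k + 1) (s, π m (Fin.snoc hist o)))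
          (C := (n : ℝ)) (ae_of_all _ fun s' => by
            rw [Real.norm_eq_abs]; exact ih (k + 1) (m + 1) (Fin.snoc hist o) s')
        simpa [measure_univ] using this
      calc ‖_ + _‖ ≤ |r k s (π m (Fin.snoc hist o))| + ‖∫ s', valAux P σ r π n (k + 1) (m + 1)
            (Fin.snoc hist o) s' ∂(P (k + 1) (s, π m (Fin.snoc hist o)))‖ := norm_add_le _ _
        _ ≤ 1 + n := add_le_add h1 h2
    have := norm_integral_le_of_norm_le_const (μ := σ k s) (C := 1 + (n : ℝ)) (ae_of_all _ h)
    simp only [probReal_univ, mul_one, Real.norm_eq_abs] at this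
    calc |_| ≤ 1 + (n : ℝ) := this
      _ = ((n + 1 : ℕ) : ℝ) := by push_cast; ring

end Aux2
section Aux3
variable {S O A : Type*} [MeasurableSpace S] [MeasurableSpace O] [MeasurableSpace A]

/-- The continuation policy after having observed `o` first. -/
def shiftPol (π : (k : ℕ) → (Fin (k + 1) → O) → A) (o : O) :
    (k : ℕ) → (Fin (k + 1) → O) → A :=
  fun k h => π (k + 1) (Fin.cons o h)

lemma measurable_shiftPol (π : (k : ℕ) → (Fin (k + 1) → O) → A)
    (hπ : ∀ k, Measurable (π k)) (o : O) : ∀ k, Measurable (shiftPol π o k) :=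
  fun k => (hπ (k + 1)).comp (measurable_consFun o)

lemma valAux_cons (P : ℕ → Kernel (S × A) S) (σ : ℕ → Kernel S O) (r : ℕ → S → A → ℝ)
    (π : (k : ℕ) → (Fin (k + 1) → O) → A) (o : O) :
    ∀ (n k m : ℕ) (hist : Fin m → O) (s : S),
      valAux P σ r π n k (m + 1) (Fin.cons o hist) s
        = valAux P σ r (shiftPol π o) n k m hist s := by
  intro n
  induction n with
  | zero => intro k m hist s; simp [valAux]
  | succ n ih =>
    intro k m hist s
    simp only [valAux]
    refine integral_congr_ae (Filter.Eventually.of_forall fun o' => ?_)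
    dsimp only
    have key : (Fin.snoc (Fin.cons o hist) o' : Fin (m + 1 + 1) → O)
        = Fin.cons o (Fin.snoc hist o') := (Fin.cons_snoc_eq_snoc_cons o hist o').symm
    rw [key]
    have : shiftPol π o m (Fin.snoc hist o') = π (m + 1) (Fin.cons o (Fin.snoc hist o')) := rfl
    rw [this]
    congr 1
    refine integral_congr_ae (Filter.Eventually.of_forall fun s' => ?_)
    exact ih (k + 1) (m + 1) (Fin.snoc hist o') s'

lemma isProbabilityMeasure_stateDist
    (p0 : Measure S) [IsProbabilityMeasure p0]
    (P : ℕ → Kernel (S × A) S) [∀ k, IsMarkovKernel (P k)] :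
    ∀ (t : ℕ) (a : Fin t → A), IsProbabilityMeasure (stateDist p0 P t a) := by
  intro t
  induction t with
  | zero => intro a; simpa [stateDist] using inferInstanceAs (IsProbabilityMeasure p0)
  | succ t ih =>
    intro a
    haveI := ih (fun i => a i.castSucc)
    constructor
    have hm : Measurable (fun s : S => P (t + 1) (s, a (Fin.last t))) :=
      (Kernel.measurable _).comp (measurable_id.prodMk measurable_const)
    rw [stateDist, Measure.bind_apply MeasurableSet.univ hm.aemeasurable]
    simp [measure_univ]

lemma integral_bind' {β γ : Type*} [MeasurableSpace β] [MeasurableSpace γ]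
    (μ : Measure β) [IsProbabilityMeasure μ] (κ : β → Measure γ) (hκ : Measurable κ)
    (hκp : ∀ b, IsProbabilityMeasure (κ b)) {f : γ → ℝ} (hf : Measurable f)
    (h0 : ∀ x, 0 ≤ f x) {C : ℝ} (hC : ∀ x, f x ≤ C) :
    ∫ x, f x ∂(μ.bind κ) = ∫ b, ∫ x, f x ∂(κ b) ∂μ := by
  have hfm : Measurable fun x => ENNReal.ofReal (f x) := ENNReal.measurable_ofReal.comp hf
  have hLle : ∀ ν : Measure γ, IsProbabilityMeasure ν →
      ∫⁻ x, ENNReal.ofReal (f x) ∂ν ≤ ENNReal.ofReal C := by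
    intro ν hν
    calc ∫⁻ x, ENNReal.ofReal (f x) ∂ν ≤ ∫⁻ _, ENNReal.ofReal C ∂ν :=
          lintegral_mono fun x => ENNReal.ofReal_le_ofReal (hC x)
      _ = ENNReal.ofReal C := by simp [measure_univ]
  have heq : ∀ (ν : Measure γ), IsProbabilityMeasure ν →
      ∫ x, f x ∂ν = (∫⁻ x, ENNReal.ofReal (f x) ∂ν).toReal := by
    intro ν hν
    rw [integral_eq_lintegral_of_nonneg_ae (ae_of_all _ h0) hf.aestronglyMeasurable]
  haveI hbp : IsProbabilityMeasure (μ.bind κ) := by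
    constructor
    rw [Measure.bind_apply MeasurableSet.univ hκ.aemeasurable]
    simp only [measure_univ]
    simp
  rw [heq _ hbp, Measure.lintegral_bind hκ.aemeasurable hfm.aemeasurable]
  have hne : ∀ b, ∫⁻ x, ENNReal.ofReal (f x) ∂(κ b) ≠ ⊤ :=
    fun b => ((hLle _ (hκp b)).trans_lt ENNReal.ofReal_lt_top).ne
  have hmeasL : Measurable fun b => ∫⁻ x, ENNReal.ofReal (f x) ∂(κ b) :=
    (Measure.measurable_lintegral hfm).comp hκ
  have hasm : AEStronglyMeasurable (fun b => ∫ x, f x ∂(κ b)) μ := by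
    refine (hmeasL.ennreal_toReal).aestronglyMeasurable.congr (ae_of_all _ fun b => ?_)
    exact (heq _ (hκp b)).symm
  rw [integral_eq_lintegral_of_nonneg_ae (ae_of_all _ fun b => integral_nonneg h0) hasm]
  congr 1
  refine lintegral_congr fun b => ?_
  rw [heq _ (hκp b), ENNReal.ofReal_toReal (hne b)]

end Aux3
section Aux4
variable {S O A : Type*} [MeasurableSpace S] [MeasurableSpace O] [MeasurableSpace A]

lemma stateDist_snoc (p0 : Measure S) (P : ℕ → Kernel (S × A) S)
    (t : ℕ) (a : Fin t → A) (a' : A) :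
    stateDist p0 P (t + 1) (Fin.snoc a a')
      = (stateDist p0 P t a).bind (fun s => P (t + 1) (s, a')) := by
  simp only [stateDist, Fin.snoc_castSucc, Fin.snoc_last]

/-- The policy taking action `a'` first, then following `π'` (ignoring the first
observation). -/
def extendPol (a' : A) (π' : (k : ℕ) → (Fin (k + 1) → O) → A) :
    (k : ℕ) → (Fin (k + 1) → O) → A
  | 0 => fun _ => a'
  | (k + 1) => fun h => π' k (Fin.tail h)

lemma measurable_extendPol (a' : A) (π' : (k : ℕ) → (Fin (k + 1) → O) → A)
    (hπ' : ∀ k, Measurable (π' k)) : ∀ k, Measurable (extendPol a' π' k) := by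
  intro k
  cases k with
  | zero => exact measurable_const
  | succ k =>
    exact (hπ' k).comp (measurable_pi_lambda _ fun i => measurable_pi_apply i.succ)

lemma shiftPol_extendPol (a' : A) (π' : (k : ℕ) → (Fin (k + 1) → O) → A) (o : O) :
    shiftPol (extendPol a' π') o = π' := by
  funext k h
  simp [shiftPol, extendPol, Fin.tail_cons]

lemma rewardToGoTilde_eq
    (T : ℕ) (p0 : Measure S) [IsProbabilityMeasure p0]
    (P : ℕ → Kernel (S × A) S) [∀ k, IsMarkovKernel (P k)]
    (σ : ℕ → Kernel S O) [∀ k, IsMarkovKernel (σ k)]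
    (r : ℕ → S → A → ℝ) (hr : ∀ k, Measurable (Function.uncurry (r k)))
    (hr01 : ∀ k s a', r k s a' ∈ Set.Icc (0:ℝ) 1)
    (t : ℕ) (a : Fin t → A)
    (q : Measure O) [IsProbabilityMeasure q]
    (π : (k : ℕ) → (Fin (k + 1) → O) → A) (hπ : ∀ k, Measurable (π k)) :
    rewardToGoTilde p0 P σ r q T t a π
      = ∫ o, ((∫ s, r t s (π 0 (fun _ => o)) ∂(stateDist p0 P t a))
          + rewardToGo p0 P σ r T (t + 1) (Fin.snoc a (π 0 (fun _ => o)))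
              (shiftPol π o)) ∂q := by
  haveI hD : IsProbabilityMeasure (stateDist p0 P t a) :=
    isProbabilityMeasure_stateDist p0 P t a
  set D := stateDist p0 P t a with hDdef
  set n := T - t - 1 with hn
  set H : S × O → ℝ := fun p => r t p.1 (π 0 (fun _ => p.2)) +
      ∫ s', valAux P σ r π n (t + 1) 1 (fun _ => p.2) s'
        ∂(P (t + 1) (p.1, π 0 (fun _ => p.2))) with hH
  -- measurability of H
  have constM : Measurable (fun o : O => (fun _ : Fin 1 => o)) :=
    measurable_pi_lambda _ fun _ => measurable_id
  have hact : Measurable (fun p : S × O => π 0 (fun _ => p.2)) :=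
    (hπ 0).comp (constM.comp measurable_snd)
  have hmap : Measurable (fun p : S × O => (p.1, π 0 (fun _ => p.2))) :=
    measurable_fst.prodMk hact
  have part1 : StronglyMeasurable (fun p : S × O => r t p.1 (π 0 (fun _ => p.2))) :=
    ((hr t).comp (measurable_fst.prodMk hact)).stronglyMeasurable
  have hf : StronglyMeasurable (fun y : (S × O) × S =>
      valAux P σ r π n (t + 1) 1 (fun _ : Fin 1 => y.1.2) y.2) :=
    (stronglyMeasurable_valAux P σ r hr π hπ n (t + 1) 1).comp_measurable
      ((constM.comp (measurable_snd.comp measurable_fst)).prodMk measurable_snd)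
  have part2 : StronglyMeasurable (fun p : S × O =>
      ∫ s', valAux P σ r π n (t + 1) 1 (fun _ : Fin 1 => p.2) s'
        ∂((P (t + 1)).comap _ hmap p)) := hf.integral_kernel_prod_right'
  simp only [Kernel.comap_apply] at part2
  have hHsm : StronglyMeasurable H := part1.add part2
  -- bound on H
  have hHb : ∀ p : S × O, ‖H p‖ ≤ 1 + n := by
    intro p
    have h1 : |r t p.1 (π 0 (fun _ => p.2))| ≤ 1 := by
      rcases hr01 t p.1 (π 0 (fun _ => p.2)) with ⟨h0', h1'⟩
      rw [abs_le]; constructor <;> linarith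
    have h2 : ‖∫ s', valAux P σ r π n (t + 1) 1 (fun _ => p.2) s'
        ∂(P (t + 1) (p.1, π 0 (fun _ => p.2)))‖ ≤ (n : ℝ) := by
      have := norm_integral_le_of_norm_le_const
        (μ := P (t + 1) (p.1, π 0 (fun _ => p.2))) (C := (n : ℝ))
        (ae_of_all _ fun s' => by
          rw [Real.norm_eq_abs]
          exact abs_valAux_le P σ r hr01 π n (t + 1) 1 (fun _ => p.2) s')
      simpa [measure_univ] using this
    calc ‖H p‖ ≤ |r t p.1 (π 0 (fun _ => p.2))| + ‖∫ s', valAux P σ r π n (t + 1) 1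
          (fun _ => p.2) s' ∂(P (t + 1) (p.1, π 0 (fun _ => p.2)))‖ := norm_add_le _ _
      _ ≤ 1 + n := add_le_add h1 h2
  have hint : Integrable (Function.uncurry fun s o => H (s, o)) (D.prod q) :=
    ⟨hHsm.aestronglyMeasurable, HasFiniteIntegral.of_bounded (C := 1 + n)
      (ae_of_all _ fun p => hHb p)⟩
  have hswap : ∫ s, ∫ o, H (s, o) ∂q ∂D = ∫ o, ∫ s, H (s, o) ∂D ∂q :=
    integral_integral_swap hint
  have hstart : rewardToGoTilde p0 P σ r q T t a π = ∫ s, ∫ o, H (s, o) ∂q ∂D := rfl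
  rw [hstart, hswap]
  refine integral_congr_ae (ae_of_all _ fun o => ?_)
  dsimp only
  -- pointwise in o
  set a' := π 0 (fun _ : Fin 1 => o) with ha'
  have hcons : ∀ s' : S, valAux P σ r π n (t + 1) 1 (fun _ => o) s'
      = valAux P σ r (shiftPol π o) n (t + 1) 0 Fin.elim0 s' := by
    intro s'
    rw [constFun_eq_cons]
    exact valAux_cons P σ r π o n (t + 1) 0 Fin.elim0 s'
  have hKrw : ∀ s : S, H (s, o) = r t s a' +
      ∫ s', valAux P σ r (shiftPol π o) n (t + 1) 0 Fin.elim0 s' ∂(P (t + 1) (s, a')) := by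
    intro s
    simp only [hH]
    congr 1
    exact integral_congr_ae (ae_of_all _ fun s' => hcons s')
  rw [integral_congr_ae (ae_of_all _ hKrw)]
  -- split the integral
  have hint1 : Integrable (fun s => r t s a') D := by
    refine ⟨((hr t).comp (measurable_id.prodMk measurable_const)).aestronglyMeasurable, ?_⟩
    refine HasFiniteIntegral.of_bounded (C := 1) (ae_of_all _ fun s => ?_)
    rcases hr01 t s a' with ⟨h0', h1'⟩
    rw [Real.norm_eq_abs, abs_le]; constructor <;> linarith
  have hg : Measurable (fun s' : S => valAux P σ r (shiftPol π o) n (t + 1) 0 Fin.elim0 s') :=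
    (stronglyMeasurable_valAux P σ r hr (shiftPol π o) (measurable_shiftPol π hπ o)
      n (t + 1) 0).measurable.comp (measurable_const.prodMk measurable_id)
  have hK_sm : StronglyMeasurable (fun s : S =>
      ∫ s', valAux P σ r (shiftPol π o) n (t + 1) 0 Fin.elim0 s' ∂(P (t + 1) (s, a'))) := by
    have hmap2 : Measurable (fun s : S => (s, a')) := measurable_id.prodMk measurable_const
    have hf2 : StronglyMeasurable (fun y : S × S =>
        valAux P σ r (shiftPol π o) n (t + 1) 0 Fin.elim0 y.2) :=
      hg.stronglyMeasurable.comp_measurable measurable_snd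
    have := hf2.integral_kernel_prod_right' (κ := (P (t + 1)).comap _ hmap2)
    simpa only [Kernel.comap_apply] using this
  have hint2 : Integrable (fun s : S =>
      ∫ s', valAux P σ r (shiftPol π o) n (t + 1) 0 Fin.elim0 s' ∂(P (t + 1) (s, a'))) D := by
    refine ⟨hK_sm.aestronglyMeasurable, ?_⟩
    refine HasFiniteIntegral.of_bounded (C := (n : ℝ)) (ae_of_all _ fun s => ?_)
    have := norm_integral_le_of_norm_le_const (μ := P (t + 1) (s, a')) (C := (n : ℝ))
      (ae_of_all _ fun s' => by
        rw [Real.norm_eq_abs]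
        exact abs_valAux_le P σ r hr01 (shiftPol π o) n (t + 1) 0 Fin.elim0 s')
    simpa [measure_univ] using this
  rw [integral_add hint1 hint2]
  congr 1
  -- identify the second integral with the reward-to-go
  have hbind : ∫ s, ∫ s', valAux P σ r (shiftPol π o) n (t + 1) 0 Fin.elim0 s'
      ∂(P (t + 1) (s, a')) ∂D
      = ∫ s', valAux P σ r (shiftPol π o) n (t + 1) 0 Fin.elim0 s'
          ∂(D.bind (fun s => P (t + 1) (s, a'))) := by
    refine (integral_bind' D (fun s => P (t + 1) (s, a'))
      ((Kernel.measurable _).comp (measurable_id.prodMk measurable_const))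
      (fun b => inferInstance) hg
      (fun s' => valAux_nonneg P σ r hr01 (shiftPol π o) n (t + 1) 0 Fin.elim0 s')
      (C := (n : ℝ)) (fun s' => ?_)).symm
    exact (abs_le.mp (abs_valAux_le P σ r hr01 (shiftPol π o) n (t + 1) 0 Fin.elim0 s')).2
  rw [hbind, ← stateDist_snoc p0 P t a a']
  have hrg : rewardToGo p0 P σ r T (t + 1) (Fin.snoc a a') (shiftPol π o)
      = ∫ s', valAux P σ r (shiftPol π o) (T - (t + 1)) (t + 1) 0 Fin.elim0 s'
          ∂(stateDist p0 P (t + 1) (Fin.snoc a a')) := rfl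
  have hTn : T - (t + 1) = n := by omega
  rw [hrg, hTn]

end Aux4
section Aux5
variable {S O A : Type*} [MeasurableSpace S] [MeasurableSpace O] [MeasurableSpace A]

lemma rewardToGo_nonneg (p0 : Measure S) (P : ℕ → Kernel (S × A) S) (σ : ℕ → Kernel S O)
    (r : ℕ → S → A → ℝ) (hr01 : ∀ k s a', r k s a' ∈ Set.Icc (0:ℝ) 1)
    (T t' : ℕ) (a' : Fin t' → A) (π' : (k : ℕ) → (Fin (k + 1) → O) → A) :
    0 ≤ rewardToGo p0 P σ r T t' a' π' :=
  integral_nonneg fun s => valAux_nonneg P σ r hr01 π' (T - t') t' 0 Fin.elim0 s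

lemma abs_rewardToGo_le (p0 : Measure S) [IsProbabilityMeasure p0]
    (P : ℕ → Kernel (S × A) S) [∀ k, IsMarkovKernel (P k)]
    (σ : ℕ → Kernel S O) [∀ k, IsMarkovKernel (σ k)]
    (r : ℕ → S → A → ℝ) (hr01 : ∀ k s a', r k s a' ∈ Set.Icc (0:ℝ) 1)
    (T t' : ℕ) (a' : Fin t' → A) (π' : (k : ℕ) → (Fin (k + 1) → O) → A) :
    |rewardToGo p0 P σ r T t' a' π'| ≤ ((T - t' : ℕ) : ℝ) := by
  haveI := isProbabilityMeasure_stateDist p0 P t' a'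
  have h : rewardToGo p0 P σ r T t' a' π'
      = ∫ s, valAux P σ r π' (T - t') t' 0 Fin.elim0 s ∂(stateDist p0 P t' a') := rfl
  rw [h, ← Real.norm_eq_abs]
  have := norm_integral_le_of_norm_le_const (μ := stateDist p0 P t' a')
    (C := ((T - t' : ℕ) : ℝ)) (ae_of_all _ fun s => by
      rw [Real.norm_eq_abs]
      exact abs_valAux_le P σ r hr01 π' (T - t') t' 0 Fin.elim0 s)
  simpa [measure_univ] using this

lemma abs_rewardToGoTilde_le (p0 : Measure S) [IsProbabilityMeasure p0]
    (P : ℕ → Kernel (S × A) S) [∀ k, IsMarkovKernel (P k)]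
    (σ : ℕ → Kernel S O) [∀ k, IsMarkovKernel (σ k)]
    (r : ℕ → S → A → ℝ) (hr01 : ∀ k s a', r k s a' ∈ Set.Icc (0:ℝ) 1)
    (q : Measure O) [IsProbabilityMeasure q]
    (T t : ℕ) (a : Fin t → A) (π : (k : ℕ) → (Fin (k + 1) → O) → A) :
    |rewardToGoTilde p0 P σ r q T t a π| ≤ 1 + ((T - t - 1 : ℕ) : ℝ) := by
  haveI := isProbabilityMeasure_stateDist p0 P t a
  have hpt : ∀ (s : S) (o : O), ‖r t s (π 0 (fun _ => o)) +
      ∫ s', valAux P σ r π (T - t - 1) (t + 1) 1 (fun _ => o) s'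
        ∂(P (t + 1) (s, π 0 (fun _ => o)))‖ ≤ 1 + ((T - t - 1 : ℕ) : ℝ) := by
    intro s o
    have h1 : |r t s (π 0 (fun _ => o))| ≤ 1 := by
      rcases hr01 t s (π 0 (fun _ => o)) with ⟨h0', h1'⟩
      rw [abs_le]; constructor <;> linarith
    have h2 : ‖∫ s', valAux P σ r π (T - t - 1) (t + 1) 1 (fun _ => o) s'
        ∂(P (t + 1) (s, π 0 (fun _ => o)))‖ ≤ ((T - t - 1 : ℕ) : ℝ) := by
      have := norm_integral_le_of_norm_le_const (μ := P (t + 1) (s, π 0 (fun _ => o)))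
        (C := ((T - t - 1 : ℕ) : ℝ)) (ae_of_all _ fun s' => by
          rw [Real.norm_eq_abs]
          exact abs_valAux_le P σ r hr01 π (T - t - 1) (t + 1) 1 (fun _ => o) s')
      simpa [measure_univ] using this
    calc ‖_ + _‖ ≤ |r t s (π 0 (fun _ => o))| + ‖∫ s', valAux P σ r π (T - t - 1) (t + 1) 1
          (fun _ => o) s' ∂(P (t + 1) (s, π 0 (fun _ => o)))‖ := norm_add_le _ _
      _ ≤ 1 + ((T - t - 1 : ℕ) : ℝ) := add_le_add h1 h2
  have hmid : ∀ s : S, ‖∫ o, (r t s (π 0 (fun _ => o)) +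
      ∫ s', valAux P σ r π (T - t - 1) (t + 1) 1 (fun _ => o) s'
        ∂(P (t + 1) (s, π 0 (fun _ => o)))) ∂q‖ ≤ 1 + ((T - t - 1 : ℕ) : ℝ) := by
    intro s
    have := norm_integral_le_of_norm_le_const (μ := q)
      (C := 1 + ((T - t - 1 : ℕ) : ℝ)) (ae_of_all _ fun o => hpt s o)
    simpa [measure_univ] using this
  rw [← Real.norm_eq_abs]
  have := norm_integral_le_of_norm_le_const (μ := stateDist p0 P t a)
    (C := 1 + ((T - t - 1 : ℕ) : ℝ)) (ae_of_all _ hmid)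
  simpa [measure_univ, rewardToGoTilde] using this

end Aux5

/-- **With a state-independent first observation, feedback at time `t` provides no
advantage:** the supremum of `R̃_{t→T}` over measurable policies equals `R^{⊥⋆}_{t→T}`
(the supremum over measurable continuation policies of the best open-loop-at-time-`t`
reward); in particular, it does not depend on `q`. -/
theorem sup_rewardToGoTilde_eq_Rperpstar
    {S O A : Type*} [MeasurableSpace S] [MeasurableSpace O] [MeasurableSpace A]
    [Fintype A] [Nonempty A]
    (T : ℕ) (hT : 1 ≤ T)
    (p0 : Measure S) [IsProbabilityMeasure p0]
    (P : ℕ → Kernel (S × A) S) [∀ k, IsMarkovKernel (P k)]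
    (σ : ℕ → Kernel S O) [∀ k, IsMarkovKernel (σ k)]
    (r : ℕ → S → A → ℝ) (hr : ∀ k, Measurable (Function.uncurry (r k)))
    (hr01 : ∀ k s a', r k s a' ∈ Set.Icc (0:ℝ) 1)
    (t : ℕ) (ht : t < T) (a : Fin t → A)
    (q : Measure O) [IsProbabilityMeasure q] :
    sSup {R : ℝ | ∃ π : (k : ℕ) → (Fin (k + 1) → O) → A,
        (∀ k, Measurable (π k)) ∧ R = rewardToGoTilde p0 P σ r q T t a π}
      = sSup {x : ℝ | ∃ π' : (k : ℕ) → (Fin (k + 1) → O) → A,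
          (∀ k, Measurable (π' k)) ∧
          x = ⨆ a' : A, ((∫ s, r t s a' ∂(stateDist p0 P t a)) +
              rewardToGo p0 P σ r T (t+1) (Fin.snoc a a') π')} := by
  classical
  set D := stateDist p0 P t a with hDdef
  haveI hD : IsProbabilityMeasure D := isProbabilityMeasure_stateDist p0 P t a
  set B : ℝ := 1 + ((T - t - 1 : ℕ) : ℝ) with hB
  set Fval : A → ((k : ℕ) → (Fin (k + 1) → O) → A) → ℝ :=
    fun a' π' => (∫ s, r t s a' ∂D) + rewardToGo p0 P σ r T (t + 1) (Fin.snoc a a') π'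
    with hFval
  have hFle : ∀ (a' : A) (π' : (k : ℕ) → (Fin (k + 1) → O) → A), Fval a' π' ≤ B := by
    intro a' π'
    have h1 : ∫ s, r t s a' ∂D ≤ 1 := by
      refine le_trans (le_abs_self _) ?_
      rw [← Real.norm_eq_abs]
      have := norm_integral_le_of_norm_le_const (μ := D) (C := 1)
        (ae_of_all _ fun s => by
          rcases hr01 t s a' with ⟨h0', h1'⟩
          rw [Real.norm_eq_abs, abs_le]; constructor <;> linarith)
      simpa [measure_univ] using this
    have h2 : rewardToGo p0 P σ r T (t + 1) (Fin.snoc a a') π' ≤ ((T - t - 1 : ℕ) : ℝ) := by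
      refine le_trans (le_abs_self _) ?_
      have := abs_rewardToGo_le p0 P σ r hr01 T (t + 1) (Fin.snoc a a') π'
      have hTT : T - (t + 1) = T - t - 1 := by omega
      rwa [hTT] at this
    calc Fval a' π' ≤ 1 + ((T - t - 1 : ℕ) : ℝ) := add_le_add h1 h2
      _ = B := rfl
  have hF0 : ∀ (a' : A) (π' : (k : ℕ) → (Fin (k + 1) → O) → A), 0 ≤ Fval a' π' :=
    fun a' π' => add_nonneg (integral_nonneg fun s => (hr01 t s a').1)
      (rewardToGo_nonneg p0 P σ r hr01 T (t + 1) (Fin.snoc a a') π')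
  set π₀ : (k : ℕ) → (Fin (k + 1) → O) → A := fun _ _ => Classical.arbitrary A with hπ₀def
  have hπ₀ : ∀ k, Measurable (π₀ k) := fun _ => measurable_const
  set LHSset : Set ℝ := {R : ℝ | ∃ π : (k : ℕ) → (Fin (k + 1) → O) → A,
      (∀ k, Measurable (π k)) ∧ R = rewardToGoTilde p0 P σ r q T t a π} with hLHS
  set RHSset : Set ℝ := {x : ℝ | ∃ π' : (k : ℕ) → (Fin (k + 1) → O) → A,
      (∀ k, Measurable (π' k)) ∧ x = ⨆ a' : A, Fval a' π'} with hRHS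
  have hLne : LHSset.Nonempty := ⟨_, π₀, hπ₀, rfl⟩
  have hRne : RHSset.Nonempty := ⟨_, π₀, hπ₀, rfl⟩
  have hRbdd : BddAbove RHSset := by
    refine ⟨B, ?_⟩
    rintro x ⟨π', hm, rfl⟩
    exact ciSup_le fun a' => hFle a' π'
  have hLbdd : BddAbove LHSset := by
    refine ⟨B, ?_⟩
    rintro x ⟨π, hm, rfl⟩
    exact le_trans (le_abs_self _) (abs_rewardToGoTilde_le p0 P σ r hr01 q T t a π)
  show sSup LHSset = sSup RHSset
  apply le_antisymm
  · refine csSup_le hLne ?_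
    rintro x ⟨π, hm, rfl⟩
    rw [rewardToGoTilde_eq T p0 P σ r hr hr01 t a q π hm]
    have hptle : ∀ o : O, (∫ s, r t s (π 0 (fun _ => o)) ∂D)
        + rewardToGo p0 P σ r T (t + 1) (Fin.snoc a (π 0 (fun _ => o))) (shiftPol π o)
        ≤ sSup RHSset := by
      intro o
      have h1 : Fval (π 0 (fun _ => o)) (shiftPol π o) ≤ ⨆ a' : A, Fval a' (shiftPol π o) :=
        le_ciSup (f := fun a' : A => Fval a' (shiftPol π o))
          (Set.Finite.bddAbove (Set.finite_range _)) (π 0 (fun _ => o))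
      have h2 : (⨆ a' : A, Fval a' (shiftPol π o)) ≤ sSup RHSset :=
        le_csSup hRbdd ⟨shiftPol π o, measurable_shiftPol π hm o, rfl⟩
      exact h1.trans h2
    by_cases hIf : Integrable (fun o : O => (∫ s, r t s (π 0 (fun _ => o)) ∂D)
        + rewardToGo p0 P σ r T (t + 1) (Fin.snoc a (π 0 (fun _ => o))) (shiftPol π o)) q
    · have := integral_mono hIf (integrable_const (sSup RHSset)) hptle
      simpa [measure_univ] using this
    · rw [integral_undef hIf]
      refine le_csSup_of_le hRbdd (⟨π₀, hπ₀, rfl⟩ : (⨆ a' : A, Fval a' π₀) ∈ RHSset) ?_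
      exact le_trans (hF0 (Classical.arbitrary A) π₀)
        (le_ciSup (f := fun a' : A => Fval a' π₀)
          (Set.Finite.bddAbove (Set.finite_range _)) (Classical.arbitrary A))
  · refine csSup_le hRne ?_
    rintro x ⟨π', hm, rfl⟩
    refine ciSup_le fun a' => ?_
    have hext := rewardToGoTilde_eq T p0 P σ r hr hr01 t a q (extendPol a' π')
      (measurable_extendPol a' π' hm)
    simp only [shiftPol_extendPol] at hext
    have hconst : ∀ o : O, extendPol a' π' 0 (fun _ => o) = a' := fun _ => rfl
    have heq : rewardToGoTilde p0 P σ r q T t a (extendPol a' π') = Fval a' π' := by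
      rw [hext]
      simp only [hconst]
      rw [integral_const]
      simp [measure_univ]
      rfl
    exact le_csSup hLbdd ⟨extendPol a' π', measurable_extendPol a' π' hm, heq.symm⟩
end
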